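/- Let H be a free ℤ-module with an alternating ℤ-bilinear form ω : H × H → ℤ. Let A, B, C be submodules, with B = B^⊥ where S^⊥ = {x ∈ H : ω(s, x) = 0 for all s ∈ S}. Let α₁, …, α_g generate A, β₁, …, β_g generate B, and γ₁, …, γ_g generate C, and define the g × g integer matrices (_αQ_γ)ᵢⱼ = ω(αᵢ, γⱼ), (_βQ_γ)ᵢⱼ = ω(βᵢ, γⱼ), and (_γQ_β)ᵢⱼ = ω(γᵢ, βⱼ). Let I_g^{g−k} denote the g × g matrix that is the identity in its upper-left (g−k) × (g−k) block and zero elsewhere, and assume ω(αᵢ, βⱼ) = (I_g^{g−k})ᵢⱼ for all i, j. Let v ∈ ℤ^g be such that x = Σᵢ vᵢ γᵢ lies in A + B. Then, setting s = −I_g^{g−k} (_βQ_γ) v and x′ = Σᵢ sᵢ αᵢ, one has: x′ ∈ A, x − x′ ∈ B, and for every w ∈ ℤ^g, ω(x′, Σⱼ wⱼ γⱼ) = vᵀ · (_γQ_β) I_g^{g−k} (_αQ_γ) · w. -/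

import Mathlib

/-- Proposition `GeneralMatrix`: with `B = B^⊥`, generators `α`, `β`, `γ`
of `A`, `B`, `C`, intersection matrices as indicated, `I` the `g × g` matrix that is the
identity in its upper-left `(g−k) × (g−k)` block and zero elsewhere, and
`ω(αᵢ,βⱼ) = Iᵢⱼ`: if `v ∈ ℤ^g` is such that `x = Σ vᵢγᵢ ∈ A + B`, then setting
`s = −I(_βQ_γ)v` and `x′ = Σ sᵢαᵢ`, one has `x′ ∈ A`, `x − x′ ∈ B`, and for every
`w ∈ ℤ^g`, `ω(x′, Σ wⱼγⱼ) = vᵀ·(_γQ_β) I (_αQ_γ)·w`. -/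
theorem stmt_12 (H : Type*) [AddCommGroup H] [Module ℤ H] [Module.Free ℤ H] (g k : ℕ)
    (ω : LinearMap.BilinForm ℤ H) (halt : ∀ x : H, ω x x = 0)
    (A B C : Submodule ℤ H)
    (hB : ∀ x : H, x ∈ B ↔ ∀ b ∈ B, ω b x = 0)
    (α β γ : Fin g → H)
    (hαA : A = Submodule.span ℤ (Set.range α))
    (hβB : B = Submodule.span ℤ (Set.range β))
    (hγC : C = Submodule.span ℤ (Set.range γ))
    (Qαγ Qβγ Qγβ I : Matrix (Fin g) (Fin g) ℤ)
    (hQαγ : ∀ i j, Qαγ i j = ω (α i) (γ j))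
    (hQβγ : ∀ i j, Qβγ i j = ω (β i) (γ j))
    (hQγβ : ∀ i j, Qγβ i j = ω (γ i) (β j))
    (hI : ∀ i j, I i j = if i = j ∧ (i : ℕ) < g - k then 1 else 0)
    (hQαβ : ∀ i j, ω (α i) (β j) = I i j)
    (v : Fin g → ℤ)
    (hx : (∑ i, v i • γ i) ∈ A ⊔ B) :
    (∑ i, (-(I.mulVec (Qβγ.mulVec v))) i • α i) ∈ A ∧
    (∑ i, v i • γ i) - (∑ i, (-(I.mulVec (Qβγ.mulVec v))) i • α i) ∈ B ∧
    ∀ w : Fin g → ℤ,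
      ω (∑ i, (-(I.mulVec (Qβγ.mulVec v))) i • α i) (∑ j, w j • γ j) =
        dotProduct v ((Qγβ * I * Qαγ).mulVec w) := by
  -- antisymmetry
  have hskew : ∀ x y : H, ω x y = -ω y x := by
    intro x y
    have h := halt (x + y)
    simp only [map_add, LinearMap.add_apply, halt x, halt y] at h
    linarith
  have hαmem : ∀ i, α i ∈ A := fun i => hαA ▸ Submodule.subset_span ⟨i, rfl⟩
  have hβmem : ∀ i, β i ∈ B := fun i => hβB ▸ Submodule.subset_span ⟨i, rfl⟩
  have hβα : ∀ j i, ω (β j) (α i) = -(I i j) := fun j i => by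
    rw [hskew, hQαβ]
  -- handling ℤ-smul (which may be zsmul) in both slots of ω
  have hsm2 : ∀ (n : ℤ) (y a : H), ω y (n • a) = n * ω y a := by
    intro n y a
    rw [map_zsmul, zsmul_eq_mul, Int.cast_id]
  have hsm1 : ∀ (n : ℤ) (a y : H), ω (n • a) y = n * ω a y := by
    intro n a y
    have h1 := map_zsmul (LinearMap.applyₗ (R := ℤ) y) n (ω a)
    have h2 := map_zsmul ω n a
    rw [h2]
    simpa [zsmul_eq_mul, Int.cast_id] using h1
  have hsum1 : ∀ (c : Fin g → ℤ) (δ : Fin g → H) (y : H),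
      ω (∑ i, c i • δ i) y = ∑ i, c i * ω (δ i) y := by
    intro c δ y
    rw [map_sum, LinearMap.sum_apply]
    exact Finset.sum_congr rfl fun i _ => hsm1 (c i) (δ i) y
  have hsum2 : ∀ (y : H) (c : Fin g → ℤ) (δ : Fin g → H),
      ω y (∑ i, c i • δ i) = ∑ i, c i * ω y (δ i) := by
    intro y c δ
    rw [map_sum]
    exact Finset.sum_congr rfl fun i _ => hsm2 (c i) y (δ i)
  set u : Fin g → ℤ := Qβγ.mulVec v with hu
  have humul : ∀ j, u j = ∑ i, Qβγ j i * v i := fun j => rfl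
  -- ω (β j) x = u j
  have hωβx : ∀ j, ω (β j) (∑ i, v i • γ i) = u j := by
    intro j
    rw [hsum2, humul]
    exact Finset.sum_congr rfl fun i _ => by rw [hQβγ, mul_comm]
  -- for j outside the block, u j = 0
  have hujzero : ∀ j : Fin g, ¬ ((j : ℕ) < g - k) → u j = 0 := by
    intro j hj
    obtain ⟨a, ha, b₀, hb₀, hab⟩ := Submodule.mem_sup.mp hx
    have hA : A ≤ LinearMap.ker (ω (β j)) := by
      rw [hαA, Submodule.span_le]
      rintro _ ⟨i, rfl⟩
      simp only [SetLike.mem_coe, LinearMap.mem_ker, hβα, hI, neg_eq_zero]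
      by_cases hij : i = j
      · subst hij; simp [hj]
      · simp [hij]
    have ha0 : ω (β j) a = 0 := hA ha
    have hb0 : ω (β j) b₀ = 0 := (hB b₀).mp hb₀ (β j) (hβmem j)
    have h0 : ω (β j) (∑ i, v i • γ i) = 0 := by
      rw [← hab, map_add, ha0, hb0, add_zero]
    rw [← hωβx j, h0]
  -- I is symmetric
  have hIsymm : ∀ i j, I i j = I j i := by
    intro i j
    rw [hI, hI]
    by_cases hij : i = j
    · subst hij; rfl
    · simp [hij, Ne.symm hij]
  -- I *ᵥ u = u
  have hIu : I.mulVec u = u := by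
    funext j
    by_cases hj : (j : ℕ) < g - k
    · simp [Matrix.mulVec, dotProduct, hI, hj]
    · rw [hujzero j hj]
      simp only [Matrix.mulVec, dotProduct, hI, hj, and_false, if_false,
        zero_mul, Finset.sum_const_zero]
  set s : Fin g → ℤ := -(I.mulVec (Qβγ.mulVec v)) with hs
  have hsu : s = -u := by rw [hs, ← hu, hIu]
  -- ω (β j) x' = u j
  have hωβx' : ∀ j, ω (β j) (∑ i, s i • α i) = u j := by
    intro j
    rw [hsum2]
    have h1 : ∑ i, s i * ω (β j) (α i) = ∑ i, I j i * u i :=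
      Finset.sum_congr rfl fun i _ => by
        rw [hβα, hsu, Pi.neg_apply, hIsymm j i]; ring
    rw [h1]
    have h2 := congrFun hIu j
    simpa [Matrix.mulVec, dotProduct] using h2
  refine ⟨?_, ?_, ?_⟩
  · exact Submodule.sum_mem _ fun i _ =>
      A.toAddSubgroup.zsmul_mem (hαmem i) _
  · rw [hB]
    intro b hb
    have hBle : B ≤ LinearMap.ker
        (LinearMap.flip ω ((∑ i, v i • γ i) - (∑ i, s i • α i))) := by
      rw [hβB, Submodule.span_le]
      rintro _ ⟨j, rfl⟩
      simp only [SetLike.mem_coe, LinearMap.mem_ker, LinearMap.flip_apply]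
      rw [map_sub, hωβx j, hωβx' j, sub_self]
    have hker := hBle hb
    simp only [LinearMap.mem_ker, LinearMap.flip_apply] at hker
    exact hker
  · intro w
    have hL : ω (∑ i, s i • α i) (∑ j, w j • γ j) =
        dotProduct s (Qαγ.mulVec w) := by
      rw [hsum1]
      refine Finset.sum_congr rfl fun i _ => ?_
      rw [hsum2]
      show s i * (∑ j, w j * ω (α i) (γ j)) = s i * ∑ j, Qαγ i j * w j
      congr 1
      exact Finset.sum_congr rfl fun j _ => by rw [hQαγ]; ring
    rw [hL]
    -- matrix algebra for the right-hand side
    have hQγβmat : Qγβ = -(Qβγ.transpose) := by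
      ext i j
      rw [Matrix.neg_apply, Matrix.transpose_apply, hQγβ, hQβγ, hskew]
    have hIT : I.transpose = I := Matrix.ext fun i j => hIsymm j i
    have hvQγβ : Matrix.vecMul v Qγβ = -u := by
      rw [hQγβmat, Matrix.vecMul_neg, Matrix.vecMul_transpose, ← hu]
    have huI : Matrix.vecMul u I = u := by
      rw [← hIT, Matrix.vecMul_transpose]
      exact hIu
    have hR : dotProduct v ((Qγβ * I * Qαγ).mulVec w) =
        dotProduct s (Qαγ.mulVec w) := by
      rw [Matrix.dotProduct_mulVec, ← Matrix.vecMul_vecMul, ← Matrix.vecMul_vecMul,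
        hvQγβ, Matrix.neg_vecMul, huI, ← hsu, ← Matrix.dotProduct_mulVec]
    exact hR.symm
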